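/- arXiv:0808.3884 — 4 statements merged into one kernel-verified Lean document; each statement's English description precedes it below -/
import Mathlib

section
/- If W is consistent, then every stable extension of the default theory ⟨W,D⟩ is a consistent set of formulae. -/
inductive Form : Type where
  | var : ℕ → Form
  | app : (n : ℕ) → ((Fin n → Bool) → Bool) → (Fin n → Form) → Form

namespace Form

def eval (σ : ℕ → Bool) : Form → Bool
  | var x => σ x
  | app _ f a => f (fun i => (a i).eval σ)

def tru : Form := app 0 (fun _ => true) (fun i => i.elim0)
def fls : Form := app 0 (fun _ => false) (fun i => i.elim0)
def neg (φ : Form) : Form := app 1 (fun v => !(v 0)) (fun _ => φ)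
def conj (φ ψ : Form) : Form := app 2 (fun v => v 0 && v 1) ![φ, ψ]
def disj (φ ψ : Form) : Form := app 2 (fun v => v 0 || v 1) ![φ, ψ]

end Form

/-- σ satisfies all formulae of A. -/
def Sat (σ : ℕ → Bool) (A : Set Form) : Prop := ∀ φ ∈ A, φ.eval σ = true

/-- Semantic consequence A ⊨ φ. -/
def Entails (A : Set Form) (φ : Form) : Prop := ∀ σ, Sat σ A → φ.eval σ = true

/-- Th(A) = {φ | A ⊨ φ}. -/
def Th (A : Set Form) : Set Form := {φ | Entails A φ}

def Consistent (A : Set Form) : Prop := ∃ σ, Sat σ A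

/-- A default rule (α : β / γ). -/
structure Default where
  pre : Form
  just : Form
  con : Form

/-- S contains W, is deductively closed, and closed under defaults applicable w.r.t. E. -/
def GammaClosed (W : Set Form) (D : Set Default) (E S : Set Form) : Prop :=
  W ⊆ S ∧ Th S = S ∧ ∀ d ∈ D, d.pre ∈ S → Form.neg d.just ∉ E → d.con ∈ S

/-- Γ(E): the smallest set satisfying the three closure conditions. -/
def Gamma (W : Set Form) (D : Set Default) (E : Set Form) : Set Form :=
  ⋂₀ {S | GammaClosed W D E S}

/-- E is a stable extension of ⟨W,D⟩. -/
def Stable (W : Set Form) (D : Set Default) (E : Set Form) : Prop :=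
  Gamma W D E = E

/-- If W is consistent, then every stable extension of ⟨W,D⟩ is consistent. -/
theorem stmt2 (W : Set Form) (D : Set Default) (hD : D.Finite)
    (hW : Consistent W) :
    ∀ E : Set Form, Stable W D E → Consistent E := by
  intro E hE
  by_contra hcon
  -- Γ(E) is itself GammaClosed
  have hGC : GammaClosed W D E (Gamma W D E) := by
    refine ⟨?_, ?_, ?_⟩
    · intro φ hφ S hS; exact hS.1 hφ
    · ext φ
      constructor
      · intro hφ S hS
        have h1 : φ ∈ Th S := by
          intro σ hσ
          exact hφ σ (fun ψ hψ => hσ ψ (hψ S hS))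
        rw [hS.2.1] at h1; exact h1
      · intro hφ σ hσ
        exact hσ φ hφ
    · intro d hd hpre hjust S hS
      exact hS.2.2 d hd (hpre S hS) hjust
  rw [hE] at hGC
  -- E is inconsistent, hence E = univ (via deductive closure)
  have hEuniv : ∀ φ : Form, φ ∈ E := by
    intro φ
    have : φ ∈ Th E := by
      intro σ hσ
      exact absurd ⟨σ, hσ⟩ hcon
    rwa [hGC.2.1] at this
  -- Th W is GammaClosed since all negated justifications are in E
  have hThW : GammaClosed W D E (Th W) := by
    refine ⟨?_, ?_, ?_⟩
    · intro φ hφ σ hσ; exact hσ φ hφ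
    · ext φ
      constructor
      · intro hφ σ hσ
        exact hφ σ (fun ψ hψ => hψ σ hσ)
      · intro hφ σ hσ; exact hσ φ hφ
    · intro d _ _ hjust
      exact absurd (hEuniv _) hjust
  have hsub : E ⊆ Th W := by
    rw [← hE]; intro φ hφ; exact hφ _ hThW
  obtain ⟨σ, hσ⟩ := hW
  have := hsub (hEuniv Form.fls) σ hσ
  simp [Form.fls, Form.eval] at this
end

section
/- Let ⟨W,D⟩ be a default theory and E a set of formulae. Define E₀ = W and E_{i+1} = Th(E_i) ∪ {γ | (α,β,γ) ∈ D, α ∈ E_i and ¬β ∉ E}. Then E is a stable extension of ⟨W,D⟩ if and only if E = ⋃_{i∈ℕ} E_i. -/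
lemma eval_neg (σ : ℕ → Bool) (φ : Form) : (Form.neg φ).eval σ = !(φ.eval σ) := rfl

def FinSat (A : Set Form) : Prop := ∀ F : Finset Form, ↑F ⊆ A → ∃ σ, Sat σ ↑F

lemma finsat_of_chain {c : Set (Set Form)} (hc : IsChain (· ⊆ ·) c) (hne : c.Nonempty)
    (hfs : ∀ s ∈ c, FinSat s) : FinSat (⋃₀ c) := by
  intro F hF
  have : ∃ s ∈ c, ↑F ⊆ s := by
    classical
    induction F using Finset.induction with
    | empty => exact ⟨hne.choose, hne.choose_spec, by simp⟩
    | @insert a F ha ih =>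
      obtain ⟨t, htc, htF⟩ := ih (fun x hx => hF (Finset.mem_insert_of_mem hx))
      obtain ⟨s, hsc, has⟩ := hF (Finset.mem_insert_self a F)
      rcases eq_or_ne s t with rfl | hst
      · exact ⟨s, hsc, by simpa using Set.insert_subset has htF⟩
      rcases hc hsc htc hst with h | h
      · exact ⟨t, htc, by simpa using Set.insert_subset (h has) htF⟩
      · exact ⟨s, hsc, by simpa using Set.insert_subset has (htF.trans h)⟩
  obtain ⟨s, hsc, hFs⟩ := this
  exact hfs s hsc F hFs

lemma not_both {M : Set Form} (hM : FinSat M) (φ : Form) (h1 : φ ∈ M)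
    (h2 : Form.neg φ ∈ M) : False := by
  classical
  obtain ⟨σ, hσ⟩ := hM {φ, Form.neg φ} (by
    intro x hx; simp at hx; rcases hx with rfl | rfl <;> assumption)
  have e1 := hσ φ (by simp)
  have e2 := hσ (Form.neg φ) (by simp)
  rw [eval_neg, e1] at e2; simp at e2

lemma maximal_complete {M : Set Form} (hM : Maximal FinSat M) (φ : Form) :
    φ ∈ M ∨ Form.neg φ ∈ M := by
  classical
  by_contra h
  push_neg at h
  have h1 : ¬ FinSat (insert φ M) := fun hfs =>
    h.1 (hM.2 hfs (Set.subset_insert _ _) (Set.mem_insert _ _))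
  have h2 : ¬ FinSat (insert (Form.neg φ) M) := fun hfs =>
    h.2 (hM.2 hfs (Set.subset_insert _ _) (Set.mem_insert _ _))
  simp only [FinSat, not_forall] at h1 h2
  obtain ⟨F1, hF1, hF1u⟩ := h1
  obtain ⟨F2, hF2, hF2u⟩ := h2
  obtain ⟨σ, hσ⟩ := hM.1 ((F1.erase φ) ∪ (F2.erase (Form.neg φ))) (by
    intro x hx
    simp only [Finset.coe_union, Set.mem_union, Finset.coe_erase, Set.mem_diff] at hx
    rcases hx with ⟨hx1, hx2⟩ | ⟨hx1, hx2⟩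
    · rcases hF1 hx1 with h | h; · exact absurd h hx2
      exact h
    · rcases hF2 hx1 with h | h; · exact absurd h hx2
      exact h)
  cases hb : φ.eval σ with
  | true =>
    refine hF1u ⟨σ, fun ψ hψ => ?_⟩
    rcases eq_or_ne ψ φ with rfl | hne
    · exact hb
    · exact hσ ψ (by simp [Finset.mem_erase, hne, hψ])
  | false =>
    refine hF2u ⟨σ, fun ψ hψ => ?_⟩
    rcases eq_or_ne ψ (Form.neg φ) with rfl | hne
    · simp [eval_neg, hb]
    · exact hσ ψ (by simp [Finset.mem_erase, hne, hψ])

lemma mem_of_fin_entails {M : Set Form} (hM : Maximal FinSat M) {F : Finset Form}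
    (hF : ↑F ⊆ M) {φ : Form} (hent : Entails ↑F φ) : φ ∈ M := by
  classical
  rcases maximal_complete hM φ with h | h
  · exact h
  exfalso
  obtain ⟨σ, hσ⟩ := hM.1 (insert (Form.neg φ) F) (by
    intro x hx; simp at hx
    rcases hx with rfl | hx
    · exact h
    · exact hF hx)
  have e1 := hent σ (fun ψ hψ => hσ ψ (by simp [hψ]))
  have e2 := hσ (Form.neg φ) (by simp)
  rw [eval_neg, e1] at e2; simp at e2

noncomputable def sigM (M : Set Form) : ℕ → Bool := fun x =>
  @decide (Form.var x ∈ M) (Classical.propDecidable _)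

lemma truth_lemma {M : Set Form} (hM : Maximal FinSat M) (φ : Form) :
    φ.eval (sigM M) = true ↔ φ ∈ M := by
  classical
  induction φ with
  | var x => simp [Form.eval, sigM, decide_eq_true_eq]
  | app n f a ih =>
    set b : Fin n → Bool := fun i => (a i).eval (sigM M) with hb
    have heval : (Form.app n f a).eval (sigM M) = f b := rfl
    set F : Finset Form :=
      Finset.image (fun i => if b i then a i else Form.neg (a i)) Finset.univ with hF
    have hFM : ↑F ⊆ M := by
      intro x hx
      simp only [hF, Finset.coe_image, Set.mem_image] at hx
      obtain ⟨i, _, rfl⟩ := hx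
      cases hbi : b i with
      | true => simpa [hbi] using (ih i).mp hbi
      | false =>
        have : a i ∉ M := fun hm => by
          have hh : b i = true := (ih i).mpr hm
          rw [hbi] at hh; simp at hh
        rcases maximal_complete hM (a i) with h | h
        · exact absurd h this
        · simpa [hbi] using h
    have hval : ∀ σ, Sat σ ↑F → ∀ i, (a i).eval σ = b i := by
      intro σ hσ i
      cases hbi : b i with
      | true =>
        exact hσ (a i) (by
          simp only [hF, Finset.coe_image, Set.mem_image]
          exact ⟨i, by simp, by simp [hbi]⟩)
      | false =>
        have := hσ (Form.neg (a i)) (by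
          simp only [hF, Finset.coe_image, Set.mem_image]
          exact ⟨i, by simp, by simp [hbi]⟩)
        rw [eval_neg] at this
        simpa using this
    rw [heval]
    cases hfb : f b with
    | true =>
      simp only [true_iff]
      refine mem_of_fin_entails hM hFM ?_
      intro σ hσ
      have : (Form.app n f a).eval σ = f b := by
        show f (fun i => (a i).eval σ) = f b
        congr 1; funext i; exact hval σ hσ i
      rw [this, hfb]
    | false =>
      simp only [Bool.false_eq_true, false_iff]
      intro hmem
      have hneg : Form.neg (Form.app n f a) ∈ M := by
        refine mem_of_fin_entails hM hFM ?_
        intro σ hσ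
        rw [eval_neg]
        have : (Form.app n f a).eval σ = f b := by
          show f (fun i => (a i).eval σ) = f b
          congr 1; funext i; exact hval σ hσ i
        rw [this, hfb]; rfl
      exact not_both hM.1 _ hmem hneg

lemma compactness {A : Set Form} (hA : FinSat A) : ∃ σ, Sat σ A := by
  obtain ⟨M, hAM, hM⟩ := zorn_subset_nonempty {S | FinSat S}
    (fun c hc hchain hne => ⟨⋃₀ c, finsat_of_chain hchain hne (fun s hs => hc hs),
      fun s hs => Set.subset_sUnion_of_mem hs⟩) A hA
  exact ⟨sigM M, fun φ hφ => (truth_lemma hM φ).mpr (hAM hφ)⟩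

lemma entails_compact {A : Set Form} {φ : Form} (h : Entails A φ) :
    ∃ F : Finset Form, ↑F ⊆ A ∧ Entails ↑F φ := by
  classical
  by_contra hc
  push_neg at hc
  have hfs : FinSat (insert (Form.neg φ) A) := by
    intro F hF
    have hsub : ↑(F.erase (Form.neg φ)) ⊆ A := by
      intro x hx
      simp only [Finset.coe_erase, Set.mem_diff, Set.mem_singleton_iff] at hx
      rcases hF hx.1 with h | h
      · exact absurd h hx.2
      · exact h
    have := hc _ hsub
    simp only [Entails, not_forall] at this
    obtain ⟨σ, hσ, hev⟩ := this
    refine ⟨σ, fun ψ hψ => ?_⟩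
    rcases eq_or_ne ψ (Form.neg φ) with rfl | hne
    · rw [eval_neg]; simp at hev ⊢; exact hev
    · exact hσ ψ (by simp [Finset.mem_erase, hne, hψ])
  obtain ⟨σ, hσ⟩ := compactness hfs
  have e1 := h σ (fun ψ hψ => hσ ψ (Set.mem_insert_of_mem _ hψ))
  have e2 := hσ (Form.neg φ) (Set.mem_insert _ _)
  rw [eval_neg, e1] at e2; simp at e2

lemma Th_mono {A B : Set Form} (h : A ⊆ B) : Th A ⊆ Th B :=
  fun φ hφ σ hσ => hφ σ (fun ψ hψ => hσ ψ (h hψ))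

lemma subset_Th (A : Set Form) : A ⊆ Th A := fun φ hφ σ hσ => hσ φ hφ

/-- Reiter's iterative characterization of stable extensions. -/
theorem stmt4 (W : Set Form) (D : Set Default) (hD : D.Finite) (E : Set Form)
    (Es : ℕ → Set Form) (h0 : Es 0 = W)
    (hs : ∀ i, Es (i + 1) =
      Th (Es i) ∪ {γ | ∃ d ∈ D, d.con = γ ∧ d.pre ∈ Es i ∧ Form.neg d.just ∉ E}) :
    Stable W D E ↔ E = ⋃ i, Es i := by
  classical
  set U := ⋃ i, Es i with hU
  have hmono : Monotone Es := monotone_nat_of_le_succ (fun i => by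
    rw [hs i]; exact Set.subset_union_of_subset_left (subset_Th _) _)
  have hThU : Th U = U := by
    apply Set.Subset.antisymm _ (subset_Th U)
    intro φ hφ
    obtain ⟨F, hFU, hFent⟩ := entails_compact hφ
    have hex : ∀ G : Finset Form, ↑G ⊆ U → ∃ N, ↑G ⊆ Es N := by
      intro G
      induction G using Finset.induction with
      | empty => exact fun _ => ⟨0, by simp⟩
      | @insert a G ha ih =>
        intro hG
        obtain ⟨N, hN⟩ := ih (fun x hx => hG (Finset.mem_insert_of_mem hx))
        obtain ⟨s, ⟨M, rfl⟩, hM⟩ := hG (Finset.mem_insert_self a G)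
        refine ⟨max N M, ?_⟩
        simp only [Finset.coe_insert]
        exact Set.insert_subset (hmono (le_max_right N M) hM)
          (hN.trans (hmono (le_max_left N M)))
    obtain ⟨N, hN⟩ := hex F hFU
    have hφN : φ ∈ Th (Es N) := fun σ hσ => hFent σ (fun ψ hψ => hσ ψ (hN hψ))
    have : φ ∈ Es (N+1) := by rw [hs N]; exact Or.inl hφN
    exact Set.mem_iUnion.mpr ⟨N+1, this⟩
  have hclosed : GammaClosed W D E U := by
    refine ⟨?_, hThU, ?_⟩
    · rw [← h0]; exact Set.subset_iUnion Es 0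
    · intro d hd hpre hjust
      obtain ⟨s, ⟨i, rfl⟩, hi⟩ := hpre
      refine Set.mem_iUnion.mpr ⟨i+1, ?_⟩
      rw [hs i]; exact Or.inr ⟨d, hd, rfl, hi, hjust⟩
  have hleast : ∀ S, GammaClosed W D E S → U ⊆ S := by
    intro S hS
    refine Set.iUnion_subset fun i => ?_
    induction i with
    | zero => rw [h0]; exact hS.1
    | succ i ih =>
      rw [hs i]
      rintro φ (hφ | ⟨d, hd, rfl, hpre, hjust⟩)
      · rw [← hS.2.1]
        exact Th_mono ih hφ
      · exact hS.2.2 d hd (ih hpre) hjust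
  have hGamma : Gamma W D E = U := by
    apply Set.Subset.antisymm (Set.sInter_subset_of_mem hclosed)
    intro φ hφ
    exact Set.mem_sInter.mpr fun S hS => hleast S hS hφ
  rw [Stable, hGamma]
  exact ⟨Eq.symm, Eq.symm⟩
end

section
/- If every connective occurring in the formulae of a default theory ⟨W,D⟩ (in W and in all prerequisites, justifications, and consequents of D) is 1-reproducing, then ⟨W,D⟩ has exactly one stable extension. -/
inductive UsesOnly (P : ∀ n, ((Fin n → Bool) → Bool) → Prop) : Form → Prop
  | var (x : ℕ) : UsesOnly P (Form.var x)
  | app {n : ℕ} {f : (Fin n → Bool) → Bool} {a : Fin n → Form} :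
      P n f → (∀ i, UsesOnly P (a i)) → UsesOnly P (Form.app n f a)

def Rep1 : ∀ n : ℕ, ((Fin n → Bool) → Bool) → Prop :=
  fun _ f => f (fun _ => true) = true

lemma eval_one {φ : Form} (h : UsesOnly Rep1 φ) : φ.eval (fun _ => true) = true := by
  induction h with
  | var x => rfl
  | @app n f a hf ha ih =>
      show f (fun i => (a i).eval (fun _ => true)) = true
      have h2 : (fun i => (a i).eval (fun _ => true)) = fun _ => true := funext ih
      rw [h2]; exact hf

/-- The "unblocked" closure condition. -/
def Plain (W : Set Form) (D : Set Default) (S : Set Form) : Prop :=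
  W ⊆ S ∧ Th S = S ∧ ∀ d ∈ D, d.pre ∈ S → d.con ∈ S

def CC (W : Set Form) (D : Set Default) : Set Form := ⋂₀ {S | Plain W D S}

section main
variable (W : Set Form) (D : Set Default)
variable (hW : ∀ φ ∈ W, UsesOnly Rep1 φ)
variable (hDc : ∀ d ∈ D, UsesOnly Rep1 d.pre ∧ UsesOnly Rep1 d.just ∧ UsesOnly Rep1 d.con)

/-- The set of formulae true under the all-true assignment. -/
def StarSet : Set Form := {φ | φ.eval (fun _ => true) = true}

lemma Th_Star : Th StarSet = StarSet := by
  apply Set.Subset.antisymm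
  · intro φ hφ
    exact hφ (fun _ => true) (fun ψ hψ => hψ)
  · exact subset_Th _

include hW hDc in
lemma Star_plain : Plain W D StarSet :=
  ⟨fun φ hφ => eval_one (hW φ hφ), Th_Star,
    fun d hd _ => eval_one (hDc d hd).2.2⟩

include hW hDc in
lemma Star_gclosed (E : Set Form) : GammaClosed W D E StarSet := by
  rcases Star_plain W D hW hDc with ⟨h1, h2, h3⟩
  exact ⟨h1, h2, fun d hd hp _ => h3 d hd hp⟩

include hDc in
lemma neg_not_star {d : Default} (hd : d ∈ D) : Form.neg d.just ∉ StarSet := by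
  have h := eval_one (hDc d hd).2.1
  intro hc
  have : (Form.neg d.just).eval (fun _ => true) = false := by
    show (!(d.just.eval (fun _ => true))) = false
    rw [h]; rfl
  rw [hc] at this; cases this

include hW hDc in
lemma gclosed_iff_plain {E : Set Form} (hE : E ⊆ StarSet) (S : Set Form) :
    GammaClosed W D E S ↔ Plain W D S := by
  constructor
  · rintro ⟨h1, h2, h3⟩
    exact ⟨h1, h2, fun d hd hp =>
      h3 d hd hp (fun hc => neg_not_star D hDc hd (hE hc))⟩
  · rintro ⟨h1, h2, h3⟩
    exact ⟨h1, h2, fun d hd hp _ => h3 d hd hp⟩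

include hW hDc in
lemma gamma_eq {E : Set Form} (hE : E ⊆ StarSet) : Gamma W D E = CC W D := by
  unfold Gamma CC
  have : {S | GammaClosed W D E S} = {S | Plain W D S} := by
    ext S
    exact gclosed_iff_plain W D hW hDc hE S
  rw [this]

omit hW hDc in
lemma CC_plain : Plain W D (CC W D) := by
  refine ⟨?_, ?_, ?_⟩
  · intro φ hφ S hS
    exact hS.1 hφ
  · apply Set.Subset.antisymm
    · intro φ hφ S hS
      have hCS : CC W D ⊆ S := Set.sInter_subset_of_mem hS
      have : φ ∈ Th S := fun σ hσ => hφ σ (fun ψ hψ => hσ ψ (hCS hψ))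
      rw [hS.2.1] at this; exact this
    · exact subset_Th _
  · intro d hd hp S hS
    exact hS.2.2 d hd (hp S hS)

include hW hDc in
lemma CC_sub_star : CC W D ⊆ StarSet :=
  Set.sInter_subset_of_mem (Star_plain W D hW hDc)

end main

/-- If every connective occurring in ⟨W,D⟩ is 1-reproducing, then ⟨W,D⟩ has
exactly one stable extension. -/
theorem stmt7 (W : Set Form) (D : Set Default) (hD : D.Finite)
    (hW : ∀ φ ∈ W, UsesOnly Rep1 φ)
    (hDc : ∀ d ∈ D, UsesOnly Rep1 d.pre ∧ UsesOnly Rep1 d.just ∧ UsesOnly Rep1 d.con) :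
    ∃! E : Set Form, Stable W D E := by
  refine ⟨CC W D, ?_, ?_⟩
  · show Gamma W D (CC W D) = CC W D
    rw [gamma_eq W D hW hDc (CC_sub_star W D hW hDc)]
  · intro E hE
    have hEstar : E ⊆ StarSet := by
      rw [← hE]
      exact Set.sInter_subset_of_mem (Star_gclosed W D hW hDc E)
    rw [← hE, gamma_eq W D hW hDc hEstar]
end

section
/- Given a directed graph G = (V,F) with distinguished nodes s, t ∈ V and a distinct propositional variable p_v for each v ∈ V, let W = {p_s} and D = {(p_u : p_u / p_v) | (u,v) ∈ F} ∪ {(p_t : p_t / ⊥)}. Then t is reachable from s in G if and only if the default theory ⟨W,D⟩ has no stable extension. -/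
lemma Th_idem (A : Set Form) : Th (Th A) = Th A := by
  apply Set.Subset.antisymm
  · intro φ hφ σ hσ
    exact hφ σ (fun ψ hψ => hψ σ hσ)
  · exact subset_Th _

lemma eval_fls (σ : ℕ → Bool) : Form.fls.eval σ = false := rfl
lemma eval_var (σ : ℕ → Bool) (n : ℕ) : (Form.var n).eval σ = σ n := rfl

lemma univ_closed (W : Set Form) (D : Set Default) (E : Set Form) :
    GammaClosed W D E Set.univ := by
  refine ⟨Set.subset_univ _, ?_, fun _ _ _ _ => trivial⟩
  apply Set.Subset.antisymm (Set.subset_univ _)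
  intro φ _
  intro σ hσ
  have := hσ Form.fls trivial
  simp [eval_fls] at this

lemma Gamma_closed (W : Set Form) (D : Set Default) (E : Set Form) :
    GammaClosed W D E (Gamma W D E) := by
  refine ⟨?_, ?_, ?_⟩
  · intro φ hφ
    exact Set.mem_sInter.2 fun S hS => hS.1 hφ
  · apply Set.Subset.antisymm
    · intro φ hφ
      refine Set.mem_sInter.2 fun S hS => ?_
      have h1 : Gamma W D E ⊆ S := Set.sInter_subset_of_mem hS
      have h2 : φ ∈ Th S := Th_mono h1 hφ
      rwa [hS.2.1] at h2
    · exact subset_Th _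
  · intro d hd hpre hjust
    refine Set.mem_sInter.2 fun S hS => ?_
    exact hS.2.2 d hd (Set.mem_sInter.1 hpre S hS) hjust

lemma inconsistent_Th_eq_univ {E : Set Form} (hc : ¬ Consistent E) (hTh : Th E = E) :
    E = Set.univ := by
  apply Set.Subset.antisymm (Set.subset_univ _)
  intro φ _
  rw [← hTh]
  intro σ hσ
  exact absurd ⟨σ, hσ⟩ hc

/-- t reachable from s iff ⟨{p_s}, D⟩ with blocking rule (p_t : p_t / ⊥) has no
stable extension. -/
theorem stmt12 (V : Type) (F : Set (V × V)) (hF : F.Finite) (s t : V)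
    (p : V → ℕ) (hp : Function.Injective p) :
    Relation.ReflTransGen (fun u v => (u, v) ∈ F) s t ↔
    ¬ ∃ E : Set Form,
        Stable {Form.var (p s)}
          ({d | ∃ e ∈ F, d = ⟨Form.var (p e.1), Form.var (p e.1), Form.var (p e.2)⟩} ∪
            {⟨Form.var (p t), Form.var (p t), Form.fls⟩}) E := by
  classical
  set W : Set Form := {Form.var (p s)} with hW
  set D : Set Default :=
    ({d | ∃ e ∈ F, d = ⟨Form.var (p e.1), Form.var (p e.1), Form.var (p e.2)⟩} ∪
      {⟨Form.var (p t), Form.var (p t), Form.fls⟩}) with hD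
  constructor
  · rintro hreach ⟨E, hE⟩
    have hGc := Gamma_closed W D E
    rw [hE] at hGc
    by_cases hc : Consistent E
    · obtain ⟨σ, hσ⟩ := hc
      have hnmem : ∀ u : V, Form.var (p u) ∈ E → Form.neg (Form.var (p u)) ∉ E := by
        intro u hu hneg
        have h1 := hσ _ hu
        have h2 := hσ _ hneg
        rw [eval_neg, h1] at h2
        simp at h2
      have key : ∀ v : V, Relation.ReflTransGen (fun u v => (u, v) ∈ F) s v →
          Form.var (p v) ∈ E := by
        intro v h
        induction h with
        | refl => exact hGc.1 rfl
        | tail _ he ih =>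
          refine hGc.2.2 ⟨_, _, _⟩ (Or.inl ⟨_, he, rfl⟩) ih (hnmem _ ih)
      have ht : Form.var (p t) ∈ E := key t hreach
      have hfls : Form.fls ∈ E :=
        hGc.2.2 ⟨_, _, _⟩ (Or.inr rfl) ht (hnmem _ ht)
      have := hσ _ hfls
      simp [eval_fls] at this
    · have hEuniv : E = Set.univ := inconsistent_Th_eq_univ hc hGc.2.1
      -- then Th W is GammaClosed w.r.t. E, so E = Gamma ⊆ Th W, but fls ∉ Th W
      have hclosed : GammaClosed W D E (Th W) := by
        refine ⟨subset_Th _, Th_idem _, ?_⟩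
        intro d _ _ hjust
        exact absurd (hEuniv ▸ Set.mem_univ _) hjust
      have hsub : E ⊆ Th W := hE ▸ Set.sInter_subset_of_mem hclosed
      have hfls : Form.fls ∈ Th W := hsub (hEuniv ▸ Set.mem_univ _)
      have := hfls (fun _ => true) (by intro φ hφ; rw [hW] at hφ; simp at hφ; subst hφ; rfl)
      simp [eval_fls] at this
  · intro hnex
    by_contra hnr
    apply hnex
    set Reach : Set V := {v | Relation.ReflTransGen (fun u v => (u, v) ∈ F) s v} with hR
    set R : Set Form := {φ | ∃ v ∈ Reach, φ = Form.var (p v)} with hRR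
    refine ⟨Th R, ?_⟩
    set σ0 : ℕ → Bool := fun n => if ∃ v ∈ Reach, p v = n then true else false with hσ0
    have hσ0R : Sat σ0 R := by
      rintro φ ⟨v, hv, rfl⟩
      simp only [eval_var, hσ0]
      exact if_pos ⟨v, hv, rfl⟩
    have hσ0t : σ0 (p t) = false := by
      simp only [hσ0]
      rw [if_neg]
      rintro ⟨v, hv, hpv⟩
      exact hnr (hp hpv ▸ hv)
    have hvarE : ∀ u : V, Form.var (p u) ∈ Th R → u ∈ Reach := by
      intro u hu
      have := hu σ0 hσ0R
      simp only [eval_var, hσ0] at this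
      by_contra hnu
      rw [if_neg] at this
      · exact Bool.false_ne_true this
      · rintro ⟨v, hv, hpv⟩
        exact hnu (hp hpv ▸ hv)
    have hnegE : ∀ u ∈ Reach, Form.neg (Form.var (p u)) ∉ Th R := by
      intro u hu hneg
      have := hneg σ0 hσ0R
      simp only [eval_neg, eval_var, hσ0] at this
      rw [if_pos ⟨u, hu, rfl⟩] at this
      simp at this
    have hclosed : GammaClosed W D (Th R) (Th R) := by
      refine ⟨?_, Th_idem _, ?_⟩
      · intro φ hφ
        rw [hW] at hφ
        simp at hφ
        subst hφ
        exact subset_Th _ ⟨s, Relation.ReflTransGen.refl, rfl⟩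
      · rintro d (⟨e, he, rfl⟩ | hd) hpre _
        · exact subset_Th _ ⟨e.2, Relation.ReflTransGen.tail (hvarE _ hpre) he, rfl⟩
        · simp only [Set.mem_singleton_iff] at hd
          subst hd
          exact absurd (hvarE _ hpre) hnr
    -- Stable: Gamma W D (Th R) = Th R
    refine Set.Subset.antisymm (Set.sInter_subset_of_mem hclosed) ?_
    have hGc := Gamma_closed W D (Th R)
    have hRsub : R ⊆ Gamma W D (Th R) := by
      rintro φ ⟨v, hv, rfl⟩
      rw [hR] at hv
      induction hv with
      | refl => exact hGc.1 rfl
      | @tail u v hsu he ih =>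
        exact hGc.2.2 ⟨_, _, _⟩ (Or.inl ⟨_, he, rfl⟩) ih (hnegE _ hsu)
    intro φ hφ
    rw [← hGc.2.1]
    exact Th_mono hRsub hφ
end
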